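/- With h̲(z) := max_{t∈{0,…,T−1}}(d̲_t − κ‖z − z̃_t‖) − ε and h̄(z) := min_{t∈{0,…,T−1}}(d̄_t + κ‖z − z̃_t‖) + ε, and with h̲* := max over the box [z̲,z̄] of h̲ and h̄* := min over the box of h̄, the gap satisfies h̄* − h̲* ≤ (d̄_0 − d̲_0) + κ‖z̄ − z̲‖ + 2ε, where z̃_0 is the midpoint of [z̲, z̄]. -/

import Mathlib

noncomputable def enorm11 {n : ℕ} (x : Fin n → ℝ) : ℝ := Real.sqrt (∑ i, (x i) ^ 2)

lemma enorm11_nonneg {n : ℕ} (x : Fin n → ℝ) : 0 ≤ enorm11 x := Real.sqrt_nonneg _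

lemma enorm11_zero {n : ℕ} : enorm11 (0 : Fin n → ℝ) = 0 := by
  simp [enorm11]

theorem abstraction_gap_bound {nz T : ℕ} (hT : 0 < T) (κ ε : ℝ) (hκ : 0 < κ) (hε : 0 ≤ ε)
    (ztil : Fin T → (Fin nz → ℝ)) (dl du : Fin T → ℝ)
    (zl zu : Fin nz → ℝ) (hle : zl ≤ zu)
    (hmid : ∀ hT0 : 0 < T, ztil ⟨0, hT0⟩ = fun i => (zl i + zu i) / 2) :
    sInf ((fun z => (⨅ t, du t + κ * enorm11 (z - ztil t)) + ε) '' {z | zl ≤ z ∧ z ≤ zu})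
      - sSup ((fun z => (⨆ t, dl t - κ * enorm11 (z - ztil t)) - ε) '' {z | zl ≤ z ∧ z ≤ zu})
      ≤ (du ⟨0, hT⟩ - dl ⟨0, hT⟩) + κ * enorm11 (zu - zl) + 2 * ε := by
  haveI : Nonempty (Fin T) := ⟨⟨0, hT⟩⟩
  set t0 : Fin T := ⟨0, hT⟩
  set m := ztil t0 with hm
  have hmem : m ∈ {z | zl ≤ z ∧ z ≤ zu} := by
    rw [hm, hmid hT]
    constructor <;> intro i <;> have := hle i <;> simp only [] <;> linarith
  -- bounds on each iInf / iSup over t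
  have hinf_le : ∀ z : Fin nz → ℝ,
      (⨅ t, du t + κ * enorm11 (z - ztil t)) ≥ (⨅ t, du t) := by
    intro z
    refine le_ciInf fun t => ?_
    calc (⨅ t, du t) ≤ du t := ciInf_le (Set.Finite.bddBelow (Set.finite_range _)) t
      _ ≤ du t + κ * enorm11 (z - ztil t) :=
        le_add_of_nonneg_right (mul_nonneg hκ.le (enorm11_nonneg _))
  have hsup_le : ∀ z : Fin nz → ℝ,
      (⨆ t, dl t - κ * enorm11 (z - ztil t)) ≤ (⨆ t, dl t) := by
    intro z
    refine ciSup_le fun t => ?_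
    calc dl t - κ * enorm11 (z - ztil t) ≤ dl t :=
        sub_le_self _ (mul_nonneg hκ.le (enorm11_nonneg _))
      _ ≤ ⨆ t, dl t := le_ciSup (Set.Finite.bddAbove (Set.finite_range _)) t
  have hbddBelow : BddBelow ((fun z => (⨅ t, du t + κ * enorm11 (z - ztil t)) + ε)
      '' {z | zl ≤ z ∧ z ≤ zu}) := by
    refine ⟨(⨅ t, du t) + ε, ?_⟩
    rintro x ⟨z, _, rfl⟩
    exact add_le_add (hinf_le z) (le_refl ε)
  have hbddAbove : BddAbove ((fun z => (⨆ t, dl t - κ * enorm11 (z - ztil t)) - ε)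
      '' {z | zl ≤ z ∧ z ≤ zu}) := by
    refine ⟨(⨆ t, dl t) - ε, ?_⟩
    rintro x ⟨z, _, rfl⟩
    exact sub_le_sub_right (hsup_le z) ε
  have hmm : m - ztil t0 = 0 := sub_self m
  have h1 : sInf ((fun z => (⨅ t, du t + κ * enorm11 (z - ztil t)) + ε)
      '' {z | zl ≤ z ∧ z ≤ zu}) ≤ du t0 + ε := by
    have h := csInf_le hbddBelow (Set.mem_image_of_mem _ hmem)
    refine h.trans ?_
    have : (⨅ t, du t + κ * enorm11 (m - ztil t)) ≤ du t0 := by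
      have := ciInf_le (f := fun t => du t + κ * enorm11 (m - ztil t))
        (Set.Finite.bddBelow (Set.finite_range _)) t0
      simpa [hmm, enorm11_zero] using this
    linarith
  have h2 : dl t0 - ε ≤ sSup ((fun z => (⨆ t, dl t - κ * enorm11 (z - ztil t)) - ε)
      '' {z | zl ≤ z ∧ z ≤ zu}) := by
    have h := le_csSup hbddAbove (Set.mem_image_of_mem _ hmem)
    refine le_trans ?_ h
    have : dl t0 ≤ (⨆ t, dl t - κ * enorm11 (m - ztil t)) := by
      have := le_ciSup (f := fun t => dl t - κ * enorm11 (m - ztil t))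
        (Set.Finite.bddAbove (Set.finite_range _)) t0
      simpa [hmm, enorm11_zero] using this
    linarith
  have hnn : 0 ≤ κ * enorm11 (zu - zl) := mul_nonneg hκ.le (enorm11_nonneg _)
  linarith
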